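/- Let K be an infinite field. Fix positive integers k ≥ 2, n_1,...,n_k and e ≥ 1, and set m := max{n_1,...,n_k}. Then there exists a minimal and nondegenerate finite set S ⊆ Y = P^{n_1} × ... × P^{n_k} with e(S) = e and #S = m + k + e. -/

import Mathlib

open scoped LinearAlgebra.Projectivization
open Projectivization

/-- The multiprojective space `Y = P^{n 0} × ... × P^{n (k-1)}` over `K`,
where `P^m = P(K^{m+1})`. -/
abbrev MultiProj (K : Type*) [Field K] {k : ℕ} (n : Fin k → ℕ) :=
  ∀ i : Fin k, ℙ K (Fin (n i + 1) → K)

/-- A vector representative of the Segre image `ν(x)` of a point `x ∈ Y`: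
the tensor product of representatives of the coordinates. -/
noncomputable def segreVec {K : Type*} [Field K] {k : ℕ} {n : Fin k → ℕ}
    (x : MultiProj K n) : PiTensorProduct K (fun i : Fin k => Fin (n i + 1) → K) :=
  PiTensorProduct.tprod K (fun i => (x i).rep)

/-- `e(S) = #S − 1 − dim⟨ν(S)⟩`, computed as `#S` minus the rank of the linear span
of vector representatives of `ν(S)`. -/
noncomputable def eSet {K : Type*} [Field K] {k : ℕ} {n : Fin k → ℕ}
    (S : Set (MultiProj K n)) : ℕ :=
  S.ncard - Module.finrank K ↥(Submodule.span K (segreVec '' S))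

/-- `S ⊆ Y` is nondegenerate: `π i '' S` spans `P^{n i}` for every `i`. -/
def Nondeg {K : Type*} [Field K] {k : ℕ} {n : Fin k → ℕ}
    (S : Set (MultiProj K n)) : Prop :=
  ∀ i : Fin k, Submodule.span K ((fun x => (x i).rep) '' S) = ⊤

/-- For products of `P^1`'s: `S` is nondegenerate iff each projection has ≥ 2 points. -/
def NondegPts {K : Type*} [Field K] {k : ℕ} {n : Fin k → ℕ}
    (S : Set (MultiProj K n)) : Prop :=
  ∀ i : Fin k, ∃ p ∈ S, ∃ q ∈ S, p i ≠ q i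

/-- `S` is a circuit: linearly dependent, but every proper subset is linearly independent. -/
def IsCircuit {K : Type*} [Field K] {k : ℕ} {n : Fin k → ℕ}
    (S : Set (MultiProj K n)) : Prop :=
  0 < eSet S ∧ ∀ S' : Set (MultiProj K n), S' ⊂ S → eSet S' = 0

/-- `q ∈ P^r` equals `ν(s)` for the point `s ∈ Y`. -/
def IsSegreOf {K : Type*} [Field K] {k : ℕ} {n : Fin k → ℕ}
    (q : ℙ K (PiTensorProduct K (fun i : Fin k => Fin (n i + 1) → K)))
    (s : MultiProj K n) : Prop :=
  ∃ c : K, q.rep = c • segreVec s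

/-- `q ∈ P^r` lies on the Segre variety `ν(Y)`. -/
def InSegre {K : Type*} [Field K] {k : ℕ} {n : Fin k → ℕ}
    (q : ℙ K (PiTensorProduct K (fun i : Fin k => Fin (n i + 1) → K))) : Prop :=
  ∃ y : MultiProj K n, IsSegreOf q y

/-- `S` is minimal: there is no projective line `L ⊆ P^r` contained in the Segre variety
`ν(Y)` meeting `ν(S)` in at least two points. -/
def IsMinimal {K : Type*} [Field K] {k : ℕ} {n : Fin k → ℕ}
    (S : Set (MultiProj K n)) : Prop :=
  ¬ ∃ W : Submodule K (PiTensorProduct K (fun i : Fin k => Fin (n i + 1) → K)),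
      Module.finrank K ↥W = 2 ∧
      (∀ x : ℙ K (PiTensorProduct K (fun i : Fin k => Fin (n i + 1) → K)),
        x.rep ∈ W → InSegre x) ∧
      ∃ x₁ x₂ : ℙ K (PiTensorProduct K (fun i : Fin k => Fin (n i + 1) → K)),
        x₁ ≠ x₂ ∧ x₁.rep ∈ W ∧ x₂.rep ∈ W ∧
        (∃ s₁ ∈ S, IsSegreOf x₁ s₁) ∧ (∃ s₂ ∈ S, IsSegreOf x₂ s₂)

/-- The `X`-rank of a point `q ∈ P^r`: the minimal cardinality of a finite `A ⊆ Y`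
with `q ∈ ⟨ν(A)⟩`. -/
noncomputable def xRank {K : Type*} [Field K] {k : ℕ} {n : Fin k → ℕ}
    (q : ℙ K (PiTensorProduct K (fun i : Fin k => Fin (n i + 1) → K))) : ℕ :=
  sInf {m : ℕ | ∃ A : Set (MultiProj K n), A.Finite ∧ A.ncard = m ∧
    q.rep ∈ Submodule.span K (segreVec '' A)}

section Aux
open PiTensorProduct Projectivization

variable {K : Type*} [Field K] {k : ℕ} {n : Fin k → ℕ}

noncomputable def contrF (f : ∀ i : Fin k, (Fin (n i + 1) → K) →ₗ[K] K) :
    PiTensorProduct K (fun i : Fin k => Fin (n i + 1) → K) →ₗ[K] K :=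
  PiTensorProduct.lift ((MultilinearMap.mkPiAlgebra K (Fin k) K).compLinearMap f)

lemma contrF_tprod (f : ∀ i : Fin k, (Fin (n i + 1) → K) →ₗ[K] K)
    (u : ∀ i, Fin (n i + 1) → K) :
    contrF f (tprod K u) = ∏ i, f i (u i) := by
  simp [contrF, lift.tprod]

lemma tprod_ne_zero' {u : ∀ i : Fin k, Fin (n i + 1) → K} (hu : ∀ i, u i ≠ 0) :
    tprod K u ≠ 0 := by
  have h : ∀ i, ∃ x, u i x ≠ 0 := fun i => Function.ne_iff.1 (hu i)
  choose x hx using h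
  intro h0
  have := congrArg (contrF fun i => LinearMap.proj (x i)) h0
  simp only [map_zero, contrF_tprod, LinearMap.proj_apply] at this
  obtain ⟨i, -, hi⟩ := Finset.prod_eq_zero_iff.1 this
  exact hx i hi

lemma contrF_update2 {i₀ i₁ : Fin k} (h01 : i₀ ≠ i₁)
    (A : (Fin (n i₀ + 1) → K) →ₗ[K] K) (B : (Fin (n i₁ + 1) → K) →ₗ[K] K)
    (h : ∀ i : Fin k, (Fin (n i + 1) → K) →ₗ[K] K) (u : ∀ i, Fin (n i + 1) → K) :
    contrF (Function.update (Function.update h i₀ A) i₁ B) (tprod K u) =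
      A (u i₀) * (B (u i₁) * ∏ i ∈ (Finset.univ.erase i₀).erase i₁, h i (u i)) := by
  classical
  rw [contrF_tprod]
  have hF : ∀ i : Fin k, (Function.update (Function.update h i₀ A) i₁ B) i (u i) =
      Function.update (Function.update (fun j => h j (u j)) i₀ (A (u i₀))) i₁ (B (u i₁)) i := by
    intro i
    rcases eq_or_ne i i₁ with rfl | hi1
    · simp
    · rcases eq_or_ne i i₀ with rfl | hi0
      · simp [Function.update_of_ne hi1, Function.update_of_ne h01.symm]
      · simp [Function.update_of_ne hi1, Function.update_of_ne hi0]
  rw [Finset.prod_congr rfl fun i _ => hF i]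
  rw [← Finset.mul_prod_erase Finset.univ _ (Finset.mem_univ i₀)]
  have hmem : i₁ ∈ Finset.univ.erase i₀ := Finset.mem_erase.2 ⟨h01.symm, Finset.mem_univ _⟩
  rw [← Finset.mul_prod_erase _ _ hmem]
  congr 1
  · rw [Function.update_of_ne h01, Function.update_self]
  · congr 1
    · rw [Function.update_self]
    · refine Finset.prod_congr rfl fun i hi => ?_
      have hi' := Finset.mem_erase.1 hi
      have hi1 := hi'.1
      have hi0 := (Finset.mem_erase.1 hi'.2).1
      rw [Function.update_of_ne hi1, Function.update_of_ne hi0]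
open Projectivization

variable {K : Type*} [Field K]

lemma indep_of_mk_ne {V : Type*} [AddCommGroup V] [Module K V] {x y : V} (hx : x ≠ 0) (hy : y ≠ 0)
    (hne : Projectivization.mk K x hx ≠ Projectivization.mk K y hy) :
    LinearIndependent K ![x, y] := by
  rw [LinearIndependent.pair_iff' hx]
  intro a ha
  have ha0 : a ≠ 0 := by rintro rfl; rw [zero_smul] at ha; exact hy ha.symm
  exact hne (((mk_eq_mk_iff' K x y hx hy).2 ⟨a⁻¹, by rw [← ha, smul_smul, inv_mul_cancel₀ ha0, one_smul]⟩))

lemma exists_dual_pair {V : Type*} [AddCommGroup V] [Module K V] {x y : V}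
    (h : LinearIndependent K ![x, y]) :
    ∃ f g : V →ₗ[K] K, f x = 1 ∧ f y = 0 ∧ g x = 0 ∧ g y = 1 := by
  have hxy : x ≠ y := by
    intro hrfl
    have := h.injective (by simp [hrfl] : ![x,y] 0 = ![x,y] 1)
    simp at this
  have hs : LinearIndepOn K id (Set.range ![x, y]) := (linearIndepOn_id_range_iff h.injective).2 h
  let b := Module.Basis.extend hs
  have hxm : x ∈ hs.extend (Set.subset_univ _) := hs.subset_extend _ ⟨0, by simp⟩
  have hym : y ∈ hs.extend (Set.subset_univ _) := hs.subset_extend _ ⟨1, by simp⟩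
  have ex : b ⟨x, hxm⟩ = x := Module.Basis.extend_apply_self hs _
  have ey : b ⟨y, hym⟩ = y := Module.Basis.extend_apply_self hs _
  have hne : (⟨x, hxm⟩ : hs.extend (Set.subset_univ _)) ≠ ⟨y, hym⟩ := by
    simp [Subtype.ext_iff, hxy]
  refine ⟨b.coord ⟨x, hxm⟩, b.coord ⟨y, hym⟩, ?_, ?_, ?_, ?_⟩
  · have : b.repr (b ⟨x, hxm⟩) ⟨x, hxm⟩ = 1 := by classical rw [b.repr_self_apply]; simp
    rwa [ex] at this
  · have : b.repr (b ⟨y, hym⟩) ⟨x, hxm⟩ = 0 := by classical rw [b.repr_self_apply]; simp [hne.symm]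
    rwa [ey] at this
  · have : b.repr (b ⟨x, hxm⟩) ⟨y, hym⟩ = 0 := by classical rw [b.repr_self_apply]; simp [hne]
    rwa [ex] at this
  · have : b.repr (b ⟨y, hym⟩) ⟨y, hym⟩ = 1 := by classical rw [b.repr_self_apply]; simp
    rwa [ey] at this

lemma exists_common_dual {d : ℕ} {x y : Fin d → K} (hx : x ≠ 0) (hy : y ≠ 0) :
    ∃ h : (Fin d → K) →ₗ[K] K, h x ≠ 0 ∧ h y ≠ 0 := by
  by_cases hli : LinearIndependent K ![x, y]
  · obtain ⟨f, g, h1, h2, h3, h4⟩ := exists_dual_pair hli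
    exact ⟨f + g, by simp [h1, h2, h3], by simp [h2, h3, h4]⟩
  · rw [LinearIndependent.pair_iff' hx] at hli
    push_neg at hli
    obtain ⟨a, ha⟩ := hli
    have ha0 : a ≠ 0 := by rintro rfl; rw [zero_smul] at ha; exact hy ha.symm
    obtain ⟨w, hw⟩ := Function.ne_iff.1 hx
    simp only [Pi.zero_apply] at hw
    refine ⟨LinearMap.proj w, by simpa using hw, ?_⟩
    rw [← ha]
    simpa using mul_ne_zero ha0 hw
lemma isMinimal_of_pairwise (hk2 : 2 ≤ k) (S : Set (MultiProj K n))
    (hpair : ∀ p ∈ S, ∀ q ∈ S, p ≠ q → ∀ i, p i ≠ q i) : IsMinimal S := by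
  classical
  rintro ⟨W, -, hWseg, x₁, x₂, hx12, hx₁W, hx₂W, ⟨s₁, hs₁S, c₁, hc₁⟩, ⟨s₂, hs₂S, c₂, hc₂⟩⟩
  have hseg1 : segreVec s₁ ≠ 0 := tprod_ne_zero' fun i => (s₁ i).rep_nonzero
  have hseg2 : segreVec s₂ ≠ 0 := tprod_ne_zero' fun i => (s₂ i).rep_nonzero
  have hc₁0 : c₁ ≠ 0 := by rintro rfl; exact x₁.rep_nonzero (by simpa using hc₁)
  have hc₂0 : c₂ ≠ 0 := by rintro rfl; exact x₂.rep_nonzero (by simpa using hc₂)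
  have hs12 : s₁ ≠ s₂ := by
    rintro rfl
    apply hx12
    rw [← x₁.mk_rep, ← x₂.mk_rep]
    apply (mk_eq_mk_iff' K _ _ x₁.rep_nonzero x₂.rep_nonzero).2 ⟨c₁ * c₂⁻¹, ?_⟩
    rw [hc₁, hc₂, smul_smul, mul_assoc, inv_mul_cancel₀ hc₂0, mul_one]
  have h0k : 0 < k := by omega
  have h1k : 1 < k := by omega
  set i₀ : Fin k := ⟨0, h0k⟩ with hi₀
  set i₁ : Fin k := ⟨1, h1k⟩ with hi₁
  have h01 : i₀ ≠ i₁ := by simp [hi₀, hi₁, Fin.ext_iff]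
  have hnei : ∀ i, s₁ i ≠ s₂ i := hpair s₁ hs₁S s₂ hs₂S hs12
  have hli0 : LinearIndependent K ![(s₁ i₀).rep, (s₂ i₀).rep] := by
    apply indep_of_mk_ne (s₁ i₀).rep_nonzero (s₂ i₀).rep_nonzero
    rw [mk_rep, mk_rep]; exact hnei i₀
  have hli1 : LinearIndependent K ![(s₁ i₁).rep, (s₂ i₁).rep] := by
    apply indep_of_mk_ne (s₁ i₁).rep_nonzero (s₂ i₁).rep_nonzero
    rw [mk_rep, mk_rep]; exact hnei i₁
  obtain ⟨f, f', hf1, hf2, hf3, hf4⟩ := exists_dual_pair hli0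
  obtain ⟨g, g', hg1, hg2, hg3, hg4⟩ := exists_dual_pair hli1
  have hcd : ∀ i, ∃ h : (Fin (n i + 1) → K) →ₗ[K] K, h (s₁ i).rep ≠ 0 ∧ h (s₂ i).rep ≠ 0 :=
    fun i => exists_common_dual (s₁ i).rep_nonzero (s₂ i).rep_nonzero
  choose h hh1 hh2 using hcd
  set R := (Finset.univ.erase i₀).erase i₁ with hR
  set C₁ := ∏ i ∈ R, h i ((s₁ i).rep) with hC₁def
  set C₂ := ∏ i ∈ R, h i ((s₂ i).rep) with hC₂def
  have hC₁ : C₁ ≠ 0 := Finset.prod_ne_zero_iff.2 fun i _ => hh1 i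
  have hC₂ : C₂ ≠ 0 := Finset.prod_ne_zero_iff.2 fun i _ => hh2 i
  set A11 := contrF (Function.update (Function.update h i₀ f) i₁ g) with hA11
  set A22 := contrF (Function.update (Function.update h i₀ f') i₁ g') with hA22
  set A12 := contrF (Function.update (Function.update h i₀ f) i₁ g') with hA12
  set A21 := contrF (Function.update (Function.update h i₀ f') i₁ g) with hA21
  set z := segreVec s₁ + segreVec s₂ with hzdef
  have e11 : A11 z = C₁ := by
    rw [hzdef, map_add, hA11]
    show contrF _ (tprod K fun i => (s₁ i).rep) + contrF _ (tprod K fun i => (s₂ i).rep) = C₁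
    rw [contrF_update2 h01, contrF_update2 h01, hf1, hg1, hf2, hg2]
    ring
  have e22 : A22 z = C₂ := by
    rw [hzdef, map_add, hA22]
    show contrF _ (tprod K fun i => (s₁ i).rep) + contrF _ (tprod K fun i => (s₂ i).rep) = C₂
    rw [contrF_update2 h01, contrF_update2 h01, hf3, hg3, hf4, hg4]
    ring
  have e12 : A12 z = 0 := by
    rw [hzdef, map_add, hA12]
    show contrF _ (tprod K fun i => (s₁ i).rep) + contrF _ (tprod K fun i => (s₂ i).rep) = 0
    rw [contrF_update2 h01, contrF_update2 h01, hf2, hg3]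
    ring
  have hz : z ≠ 0 := fun h0 => hC₁ (by rw [← e11, h0, map_zero])
  have hU₁W : segreVec s₁ ∈ W := by
    have : segreVec s₁ = c₁⁻¹ • x₁.rep := by rw [hc₁, smul_smul, inv_mul_cancel₀ hc₁0, one_smul]
    rw [this]; exact W.smul_mem _ hx₁W
  have hU₂W : segreVec s₂ ∈ W := by
    have : segreVec s₂ = c₂⁻¹ • x₂.rep := by rw [hc₂, smul_smul, inv_mul_cancel₀ hc₂0, one_smul]
    rw [this]; exact W.smul_mem _ hx₂W
  have hzW : z ∈ W := W.add_mem hU₁W hU₂W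
  set xz := Projectivization.mk K z hz with hxz
  obtain ⟨a, ha⟩ : ∃ a : Kˣ, a • z = xz.rep :=
    (mk_eq_mk_iff K _ _ xz.rep_nonzero hz).1 (mk_rep xz)
  have hxzW : xz.rep ∈ W := by rw [← ha]; exact W.smul_mem _ hzW
  obtain ⟨y, cy, hcy⟩ := hWseg xz hxzW
  have hzu : z = (((a⁻¹ : Kˣ) : K) * cy) • tprod K (fun i => (y i).rep) := by
    have h1 : z = ((a⁻¹ : Kˣ) : K) • xz.rep := by
      rw [← ha, Units.smul_def, smul_smul]
      simp
    rw [h1, hcy, smul_smul]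
    rfl
  set c' := ((a⁻¹ : Kˣ) : K) * cy with hc'
  set u := fun i => (y i).rep with hu
  set D := ∏ i ∈ R, h i (u i) with hD
  have p11 : A11 z = c' * (f (u i₀) * (g (u i₁) * D)) := by
    rw [hzu, map_smul, hA11, contrF_update2 h01, smul_eq_mul]
  have p22 : A22 z = c' * (f' (u i₀) * (g' (u i₁) * D)) := by
    rw [hzu, map_smul, hA22, contrF_update2 h01, smul_eq_mul]
  have p12 : A12 z = c' * (f (u i₀) * (g' (u i₁) * D)) := by
    rw [hzu, map_smul, hA12, contrF_update2 h01, smul_eq_mul]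
  have p21 : A21 z = c' * (f' (u i₀) * (g (u i₁) * D)) := by
    rw [hzu, map_smul, hA21, contrF_update2 h01, smul_eq_mul]
  have key : A11 z * A22 z = A12 z * A21 z := by rw [p11, p22, p12, p21]; ring
  rw [e11, e22, e12, zero_mul] at key
  exact mul_ne_zero hC₁ hC₂ key
def vC (d : ℕ) (t : K) : Fin (d + 1) → K :=
  fun x => if (x : ℕ) = 0 then 1 else if (x : ℕ) = 1 then t else 0

def vB (d w : ℕ) : Fin (d + 1) → K := fun x => if (x : ℕ) = w then 1 else 0

lemma vC_ne_zero (d : ℕ) (t : K) : vC d t ≠ 0 := fun h => by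
  have := congrFun h ⟨0, Nat.succ_pos d⟩
  simp [vC] at this

lemma vB_ne_zero {d w : ℕ} (hw : w ≤ d) : vB (K := K) d w ≠ 0 := fun h => by
  have := congrFun h ⟨w, by omega⟩
  simp [vB] at this

def pvec (n : Fin k → ℕ) (c : ℕ → K) (N₁ N₂ : ℕ) :
    Fin N₁ ⊕ Fin N₂ → ∀ i : Fin k, Fin (n i + 1) → K
  | Sum.inl a => fun i => vC (n i) (c (a : ℕ))
  | Sum.inr j => fun i =>
      if (j : ℕ) + 2 ≤ n i then vB (n i) ((j : ℕ) + 2) else vC (n i) (c (N₁ + (j : ℕ)))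

lemma pvec_ne_zero (n : Fin k → ℕ) (c : ℕ → K) (N₁ N₂ : ℕ) (x : Fin N₁ ⊕ Fin N₂) (i : Fin k) :
    pvec n c N₁ N₂ x i ≠ 0 := by
  cases x with
  | inl a => exact vC_ne_zero _ _
  | inr j =>
      dsimp [pvec]
      split
      · exact vB_ne_zero ‹_›
      · exact vC_ne_zero _ _

noncomputable def ptF (n : Fin k → ℕ) (c : ℕ → K) (N₁ N₂ : ℕ) (x : Fin N₁ ⊕ Fin N₂) :
    MultiProj K n :=
  fun i => Projectivization.mk K (pvec n c N₁ N₂ x i) (pvec_ne_zero n c N₁ N₂ x i)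

lemma ptF_pairwise {c : ℕ → K} (hc : Function.Injective c) (hn : ∀ i, 0 < n i)
    {N₁ N₂ : ℕ} {x y : Fin N₁ ⊕ Fin N₂} (hxy : x ≠ y) (i : Fin k) :
    ptF n c N₁ N₂ x i ≠ ptF n c N₁ N₂ y i := by
  intro heq
  rw [ptF, ptF, mk_eq_mk_iff'] at heq
  obtain ⟨a₀, ha⟩ := heq
  have hn1 : 1 < n i + 1 := by have := hn i; omega
  set z0 : Fin (n i + 1) := ⟨0, Nat.succ_pos _⟩ with hz0
  set z1 : Fin (n i + 1) := ⟨1, hn1⟩ with hz1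
  cases x with
  | inl a =>
    cases y with
    | inl a' =>
      have haa : (a : ℕ) ≠ (a' : ℕ) := fun h => hxy (by simpa [Fin.ext_iff] using h)
      have h0 := congrFun ha z0
      have h1 := congrFun ha z1
      simp [vC, pvec, hz0, hz1] at h0 h1
      rw [h0, one_mul] at h1
      exact haa (hc h1).symm
    | inr j =>
      by_cases hj : (j : ℕ) + 2 ≤ n i
      · have h0 := congrFun ha z0
        simp [pvec, if_pos hj, vB, vC, hz0] at h0
      · have h0 := congrFun ha z0
        have h1 := congrFun ha z1
        simp [pvec, if_neg hj, vB, vC, hz0, hz1] at h0 h1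
        rw [h0, one_mul] at h1
        have := hc h1
        omega
  | inr j =>
    cases y with
    | inl a =>
      by_cases hj : (j : ℕ) + 2 ≤ n i
      · have h0 := congrFun ha z0
        simp [pvec, if_pos hj, vB, vC, hz0] at h0
        simp only [pvec] at ha
        rw [if_pos hj, h0, zero_smul] at ha
        exact vB_ne_zero hj ha.symm
      · have h0 := congrFun ha z0
        have h1 := congrFun ha z1
        simp [pvec, if_neg hj, vB, vC, hz0, hz1] at h0 h1
        rw [h0, one_mul] at h1
        have := hc h1
        have : (a : ℕ) < N₁ := a.isLt
        omega
    | inr j' =>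
      have hjj : (j : ℕ) ≠ (j' : ℕ) := fun h => hxy (by simpa [Fin.ext_iff] using h)
      by_cases hj : (j : ℕ) + 2 ≤ n i <;> by_cases hj' : (j' : ℕ) + 2 ≤ n i
      · have h2 := congrFun ha ⟨(j : ℕ) + 2, by omega⟩
        simp [pvec, if_pos hj, if_pos hj', vB, hjj] at h2
      · have h0 := congrFun ha z0
        simp [pvec, if_pos hj, if_neg hj', vB, vC, hz0] at h0
        simp only [pvec] at ha
        rw [if_neg hj', if_pos hj, h0, zero_smul] at ha
        exact vB_ne_zero hj ha.symm
      · have h0 := congrFun ha z0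
        simp [pvec, if_neg hj, if_pos hj', vB, vC, hz0] at h0
      · have h0 := congrFun ha z0
        have h1 := congrFun ha z1
        simp [pvec, if_neg hj, if_neg hj', vC, hz0, hz1] at h0 h1
        rw [h0, one_mul] at h1
        have := hc h1
        omega

lemma ptF_injective {c : ℕ → K} (hc : Function.Injective c) (hn : ∀ i, 0 < n i) (hk : 0 < k)
    {N₁ N₂ : ℕ} : Function.Injective (ptF (K := K) n c N₁ N₂) := by
  intro x y h
  by_contra hxy
  exact ptF_pairwise hc hn hxy ⟨0, hk⟩ (congrFun h _)
lemma vC_eq (d : ℕ) (t : K) : vC d t = t • vB d 1 + vB d 0 := by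
  funext x
  by_cases h0 : (x : ℕ) = 0 <;> by_cases h1 : (x : ℕ) = 1 <;>
    simp [vC, vB, h0, h1] <;> omega

noncomputable def tG (n : Fin k → ℕ) (c : ℕ → K) (N₁ N₂ : ℕ) (x : Fin N₁ ⊕ Fin N₂) :
    PiTensorProduct K (fun i : Fin k => Fin (n i + 1) → K) :=
  PiTensorProduct.tprod K (pvec n c N₁ N₂ x)

noncomputable def bigE (n : Fin k → ℕ) (s : Finset (Fin k)) :
    PiTensorProduct K (fun i : Fin k => Fin (n i + 1) → K) :=
  PiTensorProduct.tprod K (s.piecewise (fun i => vB (n i) 1) (fun i => vB (n i) 0))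

noncomputable def bigW (n : Fin k → ℕ) (d : ℕ) :
    PiTensorProduct K (fun i : Fin k => Fin (n i + 1) → K) :=
  ∑ s ∈ Finset.univ.filter (fun s : Finset (Fin k) => s.card = d), bigE (K := K) n s

lemma tau_expand (n : Fin k → ℕ) (t : K) :
    PiTensorProduct.tprod K (fun i : Fin k => vC (n i) t) =
      ∑ d ∈ Finset.range (k + 1), t ^ d • bigW (K := K) n d := by
  classical
  set B : ∀ i : Fin k, Fin (n i + 1) → K := fun i => vB (n i) 1 with hB
  set A : ∀ i : Fin k, Fin (n i + 1) → K := fun i => vB (n i) 0 with hA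
  have h1 : (fun i : Fin k => vC (n i) t) = (fun i : Fin k => t • B i) + A := by
    funext i; rw [Pi.add_apply, vC_eq]
  rw [h1, MultilinearMap.map_add_univ]
  have h2 : ∀ s : Finset (Fin k),
      (PiTensorProduct.tprod K) (s.piecewise (fun i : Fin k => t • B i) A) =
        t ^ s.card • bigE (K := K) n s := by
    intro s
    have h3 : s.piecewise (fun i : Fin k => t • B i) A =
        s.piecewise (fun i : Fin k => (fun _ : Fin k => t) i • (s.piecewise B A) i)
          (s.piecewise B A) := by
      funext i
      by_cases hi : i ∈ s
      · simp [Finset.piecewise_eq_of_mem _ _ _ hi]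
      · simp [Finset.piecewise_eq_of_notMem _ _ _ hi]
    rw [h3, MultilinearMap.map_piecewise_smul, Finset.prod_const, bigE]
  rw [Finset.sum_congr rfl fun s _ => h2 s]
  rw [← Finset.sum_fiberwise_of_maps_to (t := Finset.range (k + 1))
    (g := fun s : Finset (Fin k) => s.card)
    (fun s _ => Finset.mem_range.2 (by
      have := Finset.card_le_univ s
      simp only [Finset.card_univ, Fintype.card_fin] at this
      simpa using Nat.lt_succ_of_le this)) (fun s => t ^ s.card • bigE (K := K) n s)]
  refine Finset.sum_congr rfl fun d _ => ?_
  rw [bigW, Finset.smul_sum]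
  refine Finset.sum_congr rfl fun s hs => ?_
  rw [(Finset.mem_filter.1 hs).2]

lemma card_filter_val_lt {k b : ℕ} (h : b ≤ k) :
    ((Finset.univ : Finset (Fin k)).filter fun i : Fin k => (i : ℕ) < b).card = b := by
  classical
  rw [← Finset.card_image_of_injective _ Fin.val_injective]
  have himg : ((Finset.univ : Finset (Fin k)).filter fun i : Fin k => (i : ℕ) < b).image Fin.val =
      Finset.range b := by
    ext x
    simp only [Finset.mem_image, Finset.mem_filter, Finset.mem_univ, true_and, Finset.mem_range]
    constructor
    · rintro ⟨i, hi, rfl⟩; exact hi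
    · intro hx; exact ⟨⟨x, by omega⟩, hx, rfl⟩
  rw [himg, Finset.card_range]
lemma finrank_tG (hn : ∀ i, 0 < n i) (hk2 : 2 ≤ k) {c : ℕ → K} (hc : Function.Injective c)
    (istar : Fin k) {M : ℕ} (hM : n istar = M) (hM1 : 1 ≤ M) (e : ℕ) :
    Module.finrank K (Submodule.span K (Set.range (tG n c (k + 1 + e) (M - 1)))) = M + k := by
  classical
  set N₁ := k + 1 + e with hN₁
  set N₂ := M - 1 with hN₂
  set ρ : Fin (k + 1) → ∀ i : Fin k, (Fin (n i + 1) → K) →ₗ[K] K := fun b i =>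
    if (i : ℕ) < (b : ℕ) then LinearMap.proj (⟨1, by have := hn i; omega⟩ : Fin (n i + 1))
    else LinearMap.proj (⟨0, Nat.succ_pos _⟩ : Fin (n i + 1)) with hρ
  set lam : Fin N₂ → ∀ i : Fin k, (Fin (n i + 1) → K) →ₗ[K] K := fun j i =>
    if h : (j : ℕ) + 2 ≤ n i then LinearMap.proj (⟨(j : ℕ) + 2, by omega⟩ : Fin (n i + 1))
    else LinearMap.proj (⟨0, Nat.succ_pos _⟩ : Fin (n i + 1)) with hlam
  have hjle : ∀ j : Fin N₂, (j : ℕ) + 2 ≤ n istar := by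
    intro j; have := j.isLt; rw [hM]; omega
  have comp1 : ∀ (b : Fin (k + 1)) (a : Fin N₁),
      contrF (ρ b) (tG n c N₁ N₂ (Sum.inl a)) = c (a : ℕ) ^ (b : ℕ) := by
    intro b a
    rw [tG, contrF_tprod]
    simp only [pvec]
    have hfac : ∀ i : Fin k, ρ b i (vC (n i) (c (a : ℕ))) =
        if (i : ℕ) < (b : ℕ) then c (a : ℕ) else 1 := by
      intro i
      simp only [hρ]
      by_cases hib : (i : ℕ) < (b : ℕ)
      · rw [if_pos hib, if_pos hib]; simp [LinearMap.proj_apply, vC]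
      · rw [if_neg hib, if_neg hib]; simp [LinearMap.proj_apply, vC]
    rw [Finset.prod_congr rfl fun i _ => hfac i, Finset.prod_ite, Finset.prod_const,
      Finset.prod_const, one_pow, mul_one,
      card_filter_val_lt (Nat.lt_succ_iff.1 b.isLt)]
  have comp2 : ∀ (b : Fin (k + 1)) (j : Fin N₂),
      contrF (ρ b) (tG n c N₁ N₂ (Sum.inr j)) = 0 := by
    intro b j
    rw [tG, contrF_tprod]
    apply Finset.prod_eq_zero (Finset.mem_univ istar)
    simp only [pvec]
    rw [if_pos (hjle j)]
    simp only [hρ]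
    by_cases hib : (istar : ℕ) < (b : ℕ)
    · rw [if_pos hib]; simp only [LinearMap.proj_apply, vB]; rw [if_neg (by omega)]
    · rw [if_neg hib]; simp only [LinearMap.proj_apply, vB]; rw [if_neg (by omega)]
  have comp3 : ∀ (j j' : Fin N₂),
      contrF (lam j) (tG n c N₁ N₂ (Sum.inr j')) = if j = j' then 1 else 0 := by
    intro j j'
    by_cases hjj : j = j'
    · subst hjj
      rw [if_pos rfl, tG, contrF_tprod]
      apply Finset.prod_eq_one
      intro i _
      simp only [pvec]
      rw [hlam]
      by_cases h : (j : ℕ) + 2 ≤ n i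
      · rw [if_pos h]; dsimp only; rw [dif_pos h]
        simp [LinearMap.proj_apply, vB]
      · rw [if_neg h]; dsimp only; rw [dif_neg h]
        simp [LinearMap.proj_apply, vC]
    · rw [if_neg hjj, tG, contrF_tprod]
      apply Finset.prod_eq_zero (Finset.mem_univ istar)
      simp only [pvec]
      rw [if_pos (hjle j'), hlam]
      dsimp only
      rw [dif_pos (hjle j)]
      simp only [LinearMap.proj_apply, vB]
      rw [if_neg (by
        have : (j : ℕ) ≠ (j' : ℕ) := fun h => hjj (Fin.ext h)
        omega)]
  have comp4 : ∀ (j : Fin N₂) (a : Fin N₁),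
      contrF (lam j) (tG n c N₁ N₂ (Sum.inl a)) = 0 := by
    intro j a
    rw [tG, contrF_tprod]
    apply Finset.prod_eq_zero (Finset.mem_univ istar)
    simp only [pvec]
    rw [hlam]
    dsimp only
    rw [dif_pos (hjle j)]
    simp only [LinearMap.proj_apply, vC]
    rw [if_neg (by omega), if_neg (by omega)]
  set Θ : PiTensorProduct K (fun i : Fin k => Fin (n i + 1) → K) →ₗ[K]
      (Fin (k + 1) ⊕ Fin N₂ → K) :=
    LinearMap.pi (Sum.elim (fun b => contrF (ρ b)) (fun j => contrF (lam j))) with hΘ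
  have hle : k + 1 ≤ N₁ := by omega
  set J : Fin (k + 1) ⊕ Fin N₂ → PiTensorProduct K (fun i : Fin k => Fin (n i + 1) → K) :=
    Sum.elim (fun b => tG n c N₁ N₂ (Sum.inl (Fin.castLE hle b)))
      (fun j => tG n c N₁ N₂ (Sum.inr j)) with hJdef
  have hJ : LinearIndependent K J := by
    rw [Fintype.linearIndependent_iff]
    intro g hg
    have h0 : Θ (∑ x, g x • J x) = 0 := by rw [hg, map_zero]
    rw [map_sum] at h0
    simp_rw [map_smul] at h0
    have hcoord : ∀ w : Fin (k + 1) ⊕ Fin N₂,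
        (∑ x : Fin (k + 1) ⊕ Fin N₂, g x *
          (Sum.elim (fun b => contrF (ρ b)) (fun j => contrF (lam j)) w) (J x)) = 0 := by
      intro w
      have := congrFun h0 w
      simpa [Finset.sum_apply, Pi.smul_apply, smul_eq_mul, hΘ, LinearMap.pi_apply] using this
    have hinr : ∀ j, g (Sum.inr j) = 0 := by
      intro j
      have hcj := hcoord (Sum.inr j)
      rw [Fintype.sum_sum_type] at hcj
      simp only [Sum.elim_inr, Sum.elim_inl, hJdef] at hcj
      rw [Finset.sum_congr rfl (fun (b : Fin (k+1)) (_ : b ∈ Finset.univ) => by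
            rw [comp4 j (Fin.castLE hle b), mul_zero]),
          Finset.sum_congr rfl (fun (j' : Fin N₂) (_ : j' ∈ Finset.univ) => by rw [comp3 j j'])] at hcj
      simp only [Finset.sum_const_zero, zero_add, mul_ite, mul_one, mul_zero] at hcj
      rwa [Finset.sum_ite_eq Finset.univ j (fun j' => g (Sum.inr j')),
        if_pos (Finset.mem_univ _)] at hcj
    have hinl : ∀ b, g (Sum.inl b) = 0 := by
      set v : Fin (k + 1) → K := fun a => c (a : ℕ) with hv
      have hvinj : Function.Injective v := by
        intro a a' h
        exact Fin.ext (hc h)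
      have hdet : (Matrix.vandermonde v).transpose.det ≠ 0 := by
        rw [Matrix.det_transpose]
        exact Matrix.det_vandermonde_ne_zero_iff.2 hvinj
      have hmv : (Matrix.vandermonde v).transpose.mulVec (fun a => g (Sum.inl a)) = 0 := by
        funext b
        have hc2 := hcoord (Sum.inl b)
        rw [Fintype.sum_sum_type] at hc2
        simp only [Sum.elim_inr, Sum.elim_inl, hJdef] at hc2
        rw [Finset.sum_congr rfl (fun (a : Fin (k+1)) (_ : a ∈ Finset.univ) => by
              rw [comp1 b (Fin.castLE hle a)]),
            Finset.sum_congr rfl (fun (j' : Fin N₂) (_ : j' ∈ Finset.univ) => by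
              rw [comp2 b j', mul_zero])] at hc2
        simp only [Finset.sum_const_zero, add_zero] at hc2
        simp only [Matrix.mulVec, dotProduct, Matrix.transpose_apply,
          Matrix.vandermonde, Pi.zero_apply, Matrix.of_apply]
        rw [← hc2]
        refine Finset.sum_congr rfl fun a _ => ?_
        rw [hv]
        simp [Fin.coe_castLE, mul_comm]
      intro b
      exact congrFun (Matrix.eq_zero_of_mulVec_eq_zero hdet hmv) b
    intro x
    cases x with
    | inl b => exact hinl b
    | inr j => exact hinr j
  set Gen : Fin (k + 1) ⊕ Fin N₂ → PiTensorProduct K (fun i : Fin k => Fin (n i + 1) → K) :=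
    Sum.elim (fun d : Fin (k + 1) => bigW (K := K) n (d : ℕ))
      (fun j => tG n c N₁ N₂ (Sum.inr j)) with hGen
  have hup : Submodule.span K (Set.range (tG n c N₁ N₂)) ≤
      Submodule.span K (Set.range Gen) := by
    rw [Submodule.span_le]
    rintro _ ⟨x, rfl⟩
    cases x with
    | inl a =>
      have hta : tG n c N₁ N₂ (Sum.inl a) =
          PiTensorProduct.tprod K (fun i => vC (n i) (c (a : ℕ))) := rfl
      rw [SetLike.mem_coe, hta, tau_expand]
      apply Submodule.sum_mem
      intro d hd
      exact Submodule.smul_mem _ _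
        (Submodule.subset_span ⟨Sum.inl ⟨d, Finset.mem_range.1 hd⟩, rfl⟩)
    | inr j => exact Submodule.subset_span ⟨Sum.inr j, rfl⟩
  have hlow : Submodule.span K (Set.range J) ≤
      Submodule.span K (Set.range (tG n c N₁ N₂)) := by
    rw [Submodule.span_le]
    rintro _ ⟨x, rfl⟩
    cases x with
    | inl b => exact Submodule.subset_span ⟨Sum.inl (Fin.castLE hle b), rfl⟩
    | inr j => exact Submodule.subset_span ⟨Sum.inr j, rfl⟩
  haveI : FiniteDimensional K (Submodule.span K (Set.range Gen)) :=
    FiniteDimensional.span_of_finite _ (Set.finite_range Gen)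
  haveI : FiniteDimensional K (Submodule.span K (Set.range (tG n c N₁ N₂))) :=
    FiniteDimensional.span_of_finite _ (Set.finite_range _)
  have hcard : Fintype.card (Fin (k + 1) ⊕ Fin N₂) = M + k := by
    simp [Fintype.card_sum]; omega
  have upper : Module.finrank K (Submodule.span K (Set.range (tG n c N₁ N₂))) ≤ M + k := by
    refine (Submodule.finrank_mono hup).trans ?_
    have := finrank_range_le_card (R := K) Gen
    rw [Set.finrank] at this
    omega
  have lower : M + k ≤ Module.finrank K (Submodule.span K (Set.range (tG n c N₁ N₂))) := by
    have h1 := finrank_span_eq_card hJ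
    rw [hcard] at h1
    have h2 := Submodule.finrank_mono hlow
    omega
  omega
lemma nondeg_ptF (hn : ∀ i, 0 < n i) (hk2 : 2 ≤ k) {c : ℕ → K} (hc : Function.Injective c)
    {M : ℕ} (hMax : ∀ i, n i ≤ M) (e : ℕ) :
    Nondeg (Set.range (ptF (K := K) n c (k + 1 + e) (M - 1))) := by
  classical
  intro i
  set N₁ := k + 1 + e with hN₁
  set N₂ := M - 1 with hN₂
  set Sp := Submodule.span K
    ((fun p : MultiProj K n => (p i).rep) '' Set.range (ptF (K := K) n c N₁ N₂)) with hSp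
  have hmem : ∀ x : Fin N₁ ⊕ Fin N₂, pvec n c N₁ N₂ x i ∈ Sp := by
    intro x
    obtain ⟨a, ha⟩ : ∃ a : Kˣ, a • pvec n c N₁ N₂ x i = (ptF (K := K) n c N₁ N₂ x i).rep :=
      (mk_eq_mk_iff K _ _ (rep_nonzero _) (pvec_ne_zero n c N₁ N₂ x i)).1
        (mk_rep (ptF (K := K) n c N₁ N₂ x i))
    have hrepmem : (ptF (K := K) n c N₁ N₂ x i).rep ∈ Sp :=
      Submodule.subset_span (Set.mem_image_of_mem _ (Set.mem_range_self x))
    have := Sp.smul_mem ((a⁻¹ : Kˣ) : K) hrepmem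
    rw [← ha, Units.smul_def, smul_smul] at this
    simpa using this
  have hx1lt : 1 < n i + 1 := by have := hn i; omega
  set x1 : Fin (n i + 1) := ⟨1, hx1lt⟩ with hx1
  set t0 := c 0 with ht0
  set t1 := c 1 with ht1
  have htne : t1 - t0 ≠ 0 := sub_ne_zero.2 fun h => by
    have := hc h; omega
  have h0N : (0 : ℕ) < N₁ := by omega
  have h1N : (1 : ℕ) < N₁ := by omega
  have hv0 : vC (n i) t0 ∈ Sp := by
    have := hmem (Sum.inl ⟨0, h0N⟩)
    simpa [pvec] using this
  have hv1 : vC (n i) t1 ∈ Sp := by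
    have := hmem (Sum.inl ⟨1, h1N⟩)
    simpa [pvec] using this
  have he1 : Pi.single x1 (1 : K) ∈ Sp := by
    have hid : Pi.single x1 (1 : K) = (t1 - t0)⁻¹ • (vC (n i) t1 - vC (n i) t0) := by
      funext y
      by_cases h0 : (y : ℕ) = 0
      · have hyne : y ≠ x1 := by simp [Fin.ext_iff, h0, hx1]
        simp [Pi.single_apply, hyne, vC, h0]
      · by_cases h1 : (y : ℕ) = 1
        · have hye : y = x1 := by simp [Fin.ext_iff, h1, hx1]
          simp [Pi.single_apply, hye, vC, h0, h1, hx1]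
          rw [inv_mul_cancel₀ htne]
        · have hyne : y ≠ x1 := by simp [Fin.ext_iff, h1, hx1]
          simp [Pi.single_apply, hyne, vC, h0, h1]
    rw [hid]
    exact Sp.smul_mem _ (Sp.sub_mem hv1 hv0)
  have hsingle : ∀ w : Fin (n i + 1), Pi.single w (1 : K) ∈ Sp := by
    intro w
    rcases Nat.lt_or_ge (w : ℕ) 2 with hw | hw
    · rcases Nat.lt_or_ge (w : ℕ) 1 with hw0 | hw1
      · -- w = 0
        have hw0' : (w : ℕ) = 0 := by omega
        have hid : Pi.single w (1 : K) = vC (n i) t0 - t0 • (Pi.single x1 (1 : K) : Fin (n i + 1) → K) := by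
          funext y
          by_cases h0 : (y : ℕ) = 0
          · have hye : y = w := by simp [Fin.ext_iff, h0, hw0']
            have hyne : y ≠ x1 := by simp [Fin.ext_iff, h0, hx1]
            have hwx : w ≠ x1 := by simp [Fin.ext_iff, hw0', hx1]
            simp [Pi.single_apply, hye, hyne, hwx, vC, h0, hw0']
          · by_cases h1 : (y : ℕ) = 1
            · have hyne : y ≠ w := by simp [Fin.ext_iff, h1, hw0']
              have hye : y = x1 := by simp [Fin.ext_iff, h1, hx1]
              have hx1w : x1 ≠ w := by simp [Fin.ext_iff, hx1, hw0']
              simp [Pi.single_apply, hyne, hye, hx1w, vC, h0, h1, sub_self, hx1, Fin.ext_iff, hw0']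
            · have hyne : y ≠ w := by simp [Fin.ext_iff, hw0', h0]
              have hyne1 : y ≠ x1 := by simp [Fin.ext_iff, h1, hx1]
              simp [Pi.single_apply, hyne, hyne1, vC, h0, h1]
        rw [hid]
        exact Sp.sub_mem hv0 (Sp.smul_mem _ he1)
      · -- w = 1
        have hwe : w = x1 := by simp [Fin.ext_iff, hx1]; omega
        rw [hwe]; exact he1
    · -- w ≥ 2
      have hwle : (w : ℕ) ≤ n i := by have := w.isLt; omega
      have hjlt : (w : ℕ) - 2 < N₂ := by have := hMax i; omega
      set j : Fin N₂ := ⟨(w : ℕ) - 2, hjlt⟩ with hj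
      have hcond : (j : ℕ) + 2 ≤ n i := by simp [hj]; omega
      have hpv : pvec n c N₁ N₂ (Sum.inr j) i = Pi.single w (1 : K) := by
        simp only [pvec]
        rw [if_pos hcond]
        funext y
        have : ((y : ℕ) = (j : ℕ) + 2) ↔ y = w := by
          rw [Fin.ext_iff]; simp [hj]; omega
        by_cases hyw : y = w
        · simp only [vB, Pi.single_apply, if_pos hyw, if_pos (this.2 hyw)]
        · rw [Pi.single_apply, if_neg hyw, vB, if_neg (fun h => hyw (this.1 h))]
      rw [← hpv]
      exact hmem _
  rw [hSp] at *
  rw [Submodule.eq_top_iff']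
  intro v
  rw [pi_eq_sum_univ v]
  apply Submodule.sum_mem
  intro w _
  apply Submodule.smul_mem
  have : (fun j => if w = j then (1 : K) else 0) = Pi.single w (1 : K) := by
    funext y; rw [Pi.single_apply]; simp [eq_comm]
  rw [this]
  exact hsingle w
end Aux

theorem exists_minimal_nondeg_card_eq_m_add_k_add_e
    {K : Type*} [Field K] [Infinite K] {k : ℕ} {n : Fin k → ℕ}
    (hk2 : 2 ≤ k) (hn : ∀ i, 0 < n i) (e : ℕ) (he : 1 ≤ e) :
    ∃ S : Set (MultiProj K n), S.Finite ∧ IsMinimal S ∧ Nondeg S ∧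
      eSet S = e ∧ S.ncard = Finset.univ.sup n + k + e := by
  classical
  have hk0 : 0 < k := by omega
  obtain ⟨istar, -, hsup⟩ :=
    Finset.exists_mem_eq_sup (Finset.univ : Finset (Fin k)) ⟨⟨0, hk0⟩, Finset.mem_univ _⟩ n
  set M : ℕ := Finset.univ.sup n with hMdef
  have hM : n istar = M := hsup.symm
  have hM1 : 1 ≤ M := by rw [← hM]; exact hn istar
  have hMax : ∀ i, n i ≤ M := fun i => Finset.le_sup (Finset.mem_univ i)
  set c : ℕ → K := fun m => Infinite.natEmbedding K m with hcdef
  have hc : Function.Injective c := (Infinite.natEmbedding K).injective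
  set N₁ : ℕ := k + 1 + e with hN₁
  set N₂ : ℕ := M - 1 with hN₂
  refine ⟨Set.range (ptF (K := K) n c N₁ N₂), Set.finite_range _, ?_, ?_, ?_, ?_⟩
  · -- minimality
    apply isMinimal_of_pairwise hk2
    rintro p ⟨x, rfl⟩ q ⟨y, rfl⟩ hne i
    have hxy : x ≠ y := fun h => hne (by rw [h])
    exact ptF_pairwise hc hn hxy i
  · exact nondeg_ptF hn hk2 hc hMax e
  · -- eSet = e
      have hncard : (Set.range (ptF (K := K) n c N₁ N₂)).ncard = M + k + e := by
        rw [← Nat.card_coe_set_eq, Nat.card_range_of_injective (ptF_injective hc hn hk0),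
          Nat.card_eq_fintype_card, Fintype.card_sum, Fintype.card_fin, Fintype.card_fin]
        omega
      have hsc : ∀ x : Fin N₁ ⊕ Fin N₂, ∃ d : K, d ≠ 0 ∧
          segreVec (ptF (K := K) n c N₁ N₂ x) = d • tG n c N₁ N₂ x := by
        intro x
        have hrep : ∀ i, ∃ a : Kˣ, a • pvec n c N₁ N₂ x i = (ptF (K := K) n c N₁ N₂ x i).rep :=
          fun i => (mk_eq_mk_iff K _ _ (rep_nonzero _) (pvec_ne_zero n c N₁ N₂ x i)).1
            (mk_rep (ptF (K := K) n c N₁ N₂ x i))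
        choose a ha using hrep
        refine ⟨∏ i, (a i : K), Finset.prod_ne_zero_iff.2 fun i _ => Units.ne_zero _, ?_⟩
        have hfun : (fun i => (ptF (K := K) n c N₁ N₂ x i).rep) =
            fun i => (a i : K) • pvec n c N₁ N₂ x i := by
          funext i
          rw [← ha i, Units.smul_def]
        rw [segreVec, hfun, MultilinearMap.map_smul_univ, tG]
      have himg : segreVec '' Set.range (ptF (K := K) n c N₁ N₂) =
          Set.range (fun x => segreVec (ptF (K := K) n c N₁ N₂ x)) :=
        (Set.range_comp segreVec (ptF (K := K) n c N₁ N₂)).symm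
      have hspan_eq : Submodule.span K (Set.range (fun x => segreVec (ptF (K := K) n c N₁ N₂ x)))
          = Submodule.span K (Set.range (tG n c N₁ N₂)) := by
        apply le_antisymm <;> rw [Submodule.span_le] <;> rintro _ ⟨x, rfl⟩
        · obtain ⟨d, hd0, hd⟩ := hsc x
          show segreVec (ptF (K := K) n c N₁ N₂ x) ∈ _
          rw [hd]
          exact Submodule.smul_mem _ _ (Submodule.subset_span (Set.mem_range_self x))
        · obtain ⟨d, hd0, hd⟩ := hsc x
          have : tG n c N₁ N₂ x = d⁻¹ • segreVec (ptF (K := K) n c N₁ N₂ x) := by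
            rw [hd, smul_smul, inv_mul_cancel₀ hd0, one_smul]
          rw [SetLike.mem_coe, this]
          exact Submodule.smul_mem _ _ (Submodule.subset_span (Set.mem_range_self x))
      have hfr : Module.finrank K
          (Submodule.span K (segreVec '' Set.range (ptF (K := K) n c N₁ N₂))) = M + k := by
        rw [himg, hspan_eq]
        exact finrank_tG hn hk2 hc istar hM hM1 e
      rw [eSet, hncard, hfr]
      omega
  · -- cardinality
      rw [← Nat.card_coe_set_eq, Nat.card_range_of_injective (ptF_injective hc hn hk0),
        Nat.card_eq_fintype_card, Fintype.card_sum, Fintype.card_fin, Fintype.card_fin]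
      omega
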